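/- Let n ≥ 1 and let s = (s_1, ..., s_n) be a sequence of positive integers with s_i ≥ s_{i+1} for i = 1, ..., n-1 and s_1 ≤ n-1. Then s is connected and graphic if and only if the sequence s' = (s_2 - 1, s_3 - 1, ..., s_{s_1+1} - 1, s_{s_1+2}, ..., s_n) of length n-1 is graphic and s_1 + s_2 + ... + s_n ≥ 2(n-1). -/

import Mathlib

open Finset SimpleGraph Set

variable {V : Type*}

/-- Edge swap: remove edges ab, cd; add edges ac, bd. -/
def swapG (G : SimpleGraph V) (a b c d : V) : SimpleGraph V where
  Adj x y := (G.Adj x y ∧ s(x,y) ≠ s(a,b) ∧ s(x,y) ≠ s(c,d)) ∨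
    ((s(x,y) = s(a,c) ∨ s(x,y) = s(b,d)) ∧ x ≠ y)
  symm := by
    refine ⟨fun x y h => ?_⟩
    have e : s(y,x) = s(x,y) := Sym2.eq_swap
    rcases h with ⟨h1, h2, h3⟩ | ⟨h1, h2⟩
    · exact Or.inl ⟨h1.symm, by rw [e]; exact h2, by rw [e]; exact h3⟩
    · exact Or.inr ⟨by rw [e]; exact h1, h2.symm⟩
  loopless := by
    refine ⟨fun x h => ?_⟩
    rcases h with ⟨h1, _⟩ | ⟨_, h2⟩
    · exact G.irrefl h1
    · exact h2 rfl

lemma swapG_adj {G : SimpleGraph V} {a b c d x y : V} :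
    (swapG G a b c d).Adj x y ↔ (G.Adj x y ∧ s(x,y) ≠ s(a,b) ∧ s(x,y) ≠ s(c,d)) ∨
    ((s(x,y) = s(a,c) ∨ s(x,y) = s(b,d)) ∧ x ≠ y) := Iff.rfl

lemma swapG_eq_badc {G : SimpleGraph V} {a b c d : V} : swapG G a b c d = swapG G b a d c := by
  ext x y
  rw [swapG_adj, swapG_adj, show s(b,a) = s(a,b) from Sym2.eq_swap,
    show s(d,c) = s(c,d) from Sym2.eq_swap, show s(b,d) = s(b,d) from rfl]
  tauto

lemma swapG_eq_cdab {G : SimpleGraph V} {a b c d : V} : swapG G a b c d = swapG G c d a b := by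
  ext x y
  rw [swapG_adj, swapG_adj, show s(c,a) = s(a,c) from Sym2.eq_swap,
    show s(d,b) = s(b,d) from Sym2.eq_swap]
  tauto

/-- Bundle of hypotheses for a valid swap. -/
structure SwapOK (G : SimpleGraph V) (a b c d : V) : Prop where
  hab : G.Adj a b
  hcd : G.Adj c d
  hac : ¬ G.Adj a c
  hbd : ¬ G.Adj b d
  hac' : a ≠ c
  had : a ≠ d
  hbc : b ≠ c
  hbd' : b ≠ d

lemma SwapOK.symm1 {G : SimpleGraph V} {a b c d : V} (h : SwapOK G a b c d) :
    SwapOK G b a d c :=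
  ⟨h.hab.symm, h.hcd.symm, h.hbd, h.hac, h.hbd', h.hbc, h.had, h.hac'⟩

lemma SwapOK.symm2 {G : SimpleGraph V} {a b c d : V} (h : SwapOK G a b c d) :
    SwapOK G c d a b :=
  ⟨h.hcd, h.hab, (fun hh => h.hac hh.symm), (fun hh => h.hbd hh.symm),
    fun hh => h.hac' hh.symm, fun hh => h.hbc hh.symm, fun hh => h.had hh.symm,
    fun hh => h.hbd' hh.symm⟩

lemma swapG_neighborSet_a {G : SimpleGraph V} {a b c d : V} (h : SwapOK G a b c d) :
    (swapG G a b c d).neighborSet a = insert c (G.neighborSet a \ {b}) := by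
  ext y
  simp only [mem_neighborSet, Set.mem_insert_iff, Set.mem_diff, Set.mem_singleton_iff]
  rw [swapG_adj]
  have hne : a ≠ b := h.hab.ne
  constructor
  · rintro (⟨h1, h2, h3⟩ | ⟨h1 | h1, h2⟩)
    · refine Or.inr ⟨h1, ?_⟩
      rintro rfl; exact h2 rfl
    · rw [Sym2.eq_iff] at h1
      rcases h1 with ⟨-, rfl⟩ | ⟨rfl, rfl⟩
      · exact Or.inl rfl
      · exact absurd rfl h.hac'
    · rw [Sym2.eq_iff] at h1
      rcases h1 with ⟨rfl, rfl⟩ | ⟨rfl, rfl⟩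
      · exact absurd rfl hne
      · exact absurd rfl h.had
  · rintro (rfl | ⟨h1, h2⟩)
    · exact Or.inr ⟨Or.inl rfl, h.hac'⟩
    · refine Or.inl ⟨h1, ?_, ?_⟩
      · intro hh
        rw [Sym2.eq_iff] at hh
        rcases hh with ⟨-, rfl⟩ | ⟨rfl, rfl⟩
        · exact h2 rfl
        · exact h2 rfl
      · intro hh
        rw [Sym2.eq_iff] at hh
        rcases hh with ⟨rfl, rfl⟩ | ⟨rfl, rfl⟩
        · exact h.hac' rfl
        · exact h.had rfl

lemma swapG_neighborSet_other {G : SimpleGraph V} {a b c d x : V}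
    (hxa : x ≠ a) (hxb : x ≠ b) (hxc : x ≠ c) (hxd : x ≠ d) :
    (swapG G a b c d).neighborSet x = G.neighborSet x := by
  ext y
  simp only [mem_neighborSet]
  rw [swapG_adj]
  constructor
  · rintro (⟨h1, -, -⟩ | ⟨h1 | h1, -⟩)
    · exact h1
    · rw [Sym2.eq_iff] at h1
      rcases h1 with ⟨rfl, rfl⟩ | ⟨rfl, rfl⟩
      · exact absurd rfl hxa
      · exact absurd rfl hxc
    · rw [Sym2.eq_iff] at h1
      rcases h1 with ⟨rfl, rfl⟩ | ⟨rfl, rfl⟩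
      · exact absurd rfl hxb
      · exact absurd rfl hxd
  · intro h1
    refine Or.inl ⟨h1, ?_, ?_⟩
    · intro hh
      rw [Sym2.eq_iff] at hh
      rcases hh with ⟨rfl, rfl⟩ | ⟨rfl, rfl⟩
      · exact hxa rfl
      · exact hxb rfl
    · intro hh
      rw [Sym2.eq_iff] at hh
      rcases hh with ⟨rfl, rfl⟩ | ⟨rfl, rfl⟩
      · exact hxc rfl
      · exact hxd rfl

section DegNcard
variable [Fintype V]

lemma deg_eq_ncard (G : SimpleGraph V) [DecidableRel G.Adj] (v : V) :
    G.degree v = (G.neighborSet v).ncard := by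
  classical
  rw [← card_neighborSet_eq_degree, Set.ncard_eq_toFinset_card', Set.toFinset_card]

lemma ncard_step {N : Set V} {b c : V} (hb : b ∈ N) (hc : c ∉ N) :
    (insert c (N \ {b})).ncard = N.ncard := by
  rw [Set.ncard_insert_of_notMem (by simp [hc]) (Set.toFinite _),
    Set.ncard_diff_singleton_of_mem hb]
  have h1 : 0 < N.ncard := (Set.ncard_pos (Set.toFinite _)).mpr ⟨b, hb⟩
  omega

lemma ncard_neighborSet_swapG {G : SimpleGraph V} {a b c d : V}
    (h : SwapOK G a b c d) (x : V) :
    ((swapG G a b c d).neighborSet x).ncard = (G.neighborSet x).ncard := by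
  classical
  by_cases hxa : x = a
  · subst hxa
    rw [swapG_neighborSet_a h]
    exact ncard_step h.hab h.hac
  by_cases hxb : x = b
  · subst hxb
    rw [swapG_eq_badc, swapG_neighborSet_a h.symm1]
    exact ncard_step h.hab.symm h.hbd
  by_cases hxc : x = c
  · subst hxc
    rw [swapG_eq_cdab, swapG_neighborSet_a h.symm2]
    exact ncard_step h.hcd (fun hh => h.hac hh.symm)
  by_cases hxd : x = d
  · subst hxd
    rw [swapG_eq_cdab, swapG_eq_badc, swapG_neighborSet_a h.symm2.symm1]
    exact ncard_step h.hcd.symm (fun hh => h.hbd hh.symm)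
  rw [swapG_neighborSet_other hxa hxb hxc hxd]

end DegNcard

lemma reachable_of_adj_imp {G G' : SimpleGraph V}
    (h : ∀ x y, G.Adj x y → G'.Reachable x y) {u v : V} (huv : G.Reachable u v) :
    G'.Reachable u v := by
  obtain ⟨w⟩ := huv
  induction w with
  | nil => exact Reachable.refl _
  | cons ha _ ih => exact (h _ _ ha).trans ih

/-- Map on connected components induced by a reachability-preserving condition. -/
noncomputable def ccMap {G G' : SimpleGraph V} (h : ∀ x y, G.Adj x y → G'.Reachable x y) :
    G.ConnectedComponent → G'.ConnectedComponent :=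
  ConnectedComponent.lift (fun v => G'.connectedComponentMk v)
    (fun v w p _ => ConnectedComponent.sound (reachable_of_adj_imp h ⟨p⟩))

lemma ccMap_surjective {G G' : SimpleGraph V} (h : ∀ x y, G.Adj x y → G'.Reachable x y) :
    Function.Surjective (ccMap h) := by
  intro c
  obtain ⟨v, rfl⟩ := c.exists_rep
  exact ⟨G.connectedComponentMk v, rfl⟩

lemma card_cc_lt [Finite V] {G G' : SimpleGraph V}
    (h : ∀ x y, G.Adj x y → G'.Reachable x y) {a c : V}
    (hne : G.connectedComponentMk a ≠ G.connectedComponentMk c)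
    (heq : G'.Reachable a c) :
    Nat.card G'.ConnectedComponent < Nat.card G.ConnectedComponent := by
  have hsur := ccMap_surjective h
  have hle : Nat.card G'.ConnectedComponent ≤ Nat.card G.ConnectedComponent :=
    Nat.card_le_card_of_surjective _ hsur
  rcases lt_or_eq_of_le hle with h1 | h1
  · exact h1
  · exfalso
    have hbij : Function.Bijective (ccMap h) :=
      (Nat.bijective_iff_surjective_and_card _).mpr ⟨hsur, h1.symm⟩
    apply hne
    apply hbij.injective
    exact ConnectedComponent.sound heq

lemma edgeSet_delete_eq {G : SimpleGraph V} {x y : V} (hxy : G.Adj x y) :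
    (G \ fromEdgeSet {s(x,y)}).edgeSet = G.edgeSet \ {s(x,y)} := by
  rw [edgeSet_sdiff, edgeSet_fromEdgeSet]
  have hd : ({s(x,y)} : Set (Sym2 V)) \ {e | e.IsDiag} = {s(x,y)} := by
    ext e
    simp only [Set.mem_diff, Set.mem_singleton_iff, Set.mem_setOf_eq, and_iff_left_iff_imp]
    rintro rfl
    simp [hxy.ne]
  rw [show Sym2.diagSet = {e : Sym2 V | e.IsDiag} from rfl, hd]

lemma delete_adj_of {G : SimpleGraph V} {x y u v : V} (h : G.Adj u v)
    (hne : s(u,v) ≠ s(x,y)) : (G \ fromEdgeSet {s(x,y)}).Adj u v := by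
  rw [sdiff_adj, fromEdgeSet_adj]
  exact ⟨h, fun hh => hne hh.1⟩

section Counting
variable [Fintype V] [DecidableEq V]

/-- A connected graph on `n` vertices has at least `n - 1` edges. -/
lemma conn_card_le : ∀ k (G : SimpleGraph V), G.edgeSet.ncard ≤ k → G.Connected →
    Fintype.card V ≤ G.edgeSet.ncard + 1 := by
  intro k
  induction k with
  | zero =>
    intro G hk hc
    classical
    by_cases hac : G.IsAcyclic
    · have ht : G.IsTree := ⟨hc, hac⟩
      have h2 : G.edgeFinset.card + 1 = Fintype.card V := ht.card_edgeFinset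
      have h3 : G.edgeSet.ncard = G.edgeFinset.card := Set.ncard_eq_toFinset_card' _
      have hcard : 0 < Fintype.card V := Fintype.card_pos_iff.mpr hc.nonempty
      omega
    · exfalso
      rw [isAcyclic_iff_forall_edge_isBridge] at hac
      push_neg at hac
      obtain ⟨e, he, -⟩ := hac
      have : G.edgeSet.ncard ≠ 0 := by
        intro hh
        rw [Set.ncard_eq_zero (Set.toFinite _)] at hh
        rw [hh] at he
        exact he
      omega
  | succ k ih =>
    intro G hk hc
    classical
    by_cases hac : G.IsAcyclic
    · have ht : G.IsTree := ⟨hc, hac⟩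
      have h2 : G.edgeFinset.card + 1 = Fintype.card V := ht.card_edgeFinset
      have h3 : G.edgeSet.ncard = G.edgeFinset.card := Set.ncard_eq_toFinset_card' _
      have hcard : 0 < Fintype.card V := Fintype.card_pos_iff.mpr hc.nonempty
      omega
    · rw [isAcyclic_iff_forall_edge_isBridge] at hac
      push_neg at hac
      obtain ⟨e, he, hbr⟩ := hac
      induction e with
      | _ x y =>
        rw [mem_edgeSet] at he
        rw [isBridge_iff] at hbr
        push_neg at hbr
        have hreach := hbr
        set G' := G \ fromEdgeSet {s(x,y)} with hG'
        have hE' : G'.edgeSet = G.edgeSet \ {s(x,y)} := edgeSet_delete_eq he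
        have himp : ∀ u v, G.Adj u v → G'.Reachable u v := by
          intro u v huv
          by_cases hh : s(u,v) = s(x,y)
          · rw [Sym2.eq_iff] at hh
            rcases hh with ⟨rfl, rfl⟩ | ⟨rfl, rfl⟩
            · exact hreach
            · exact hreach.symm
          · exact SimpleGraph.Adj.reachable (delete_adj_of huv hh)
        have hc' : G'.Connected := by
          rw [connected_iff] at hc ⊢
          exact ⟨fun u v => reachable_of_adj_imp himp (hc.1 u v), hc.2⟩
        have hmem : s(x,y) ∈ G.edgeSet := (G.mem_edgeSet).mpr he
        have hcard' : G'.edgeSet.ncard = G.edgeSet.ncard - 1 := by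
          rw [hE', Set.ncard_diff_singleton_of_mem hmem]
        have hpos : 0 < G.edgeSet.ncard :=
          (Set.ncard_pos (Set.toFinite _)).mpr ⟨_, hmem⟩
        have := ih G' (by omega) hc'
        omega

/-- An acyclic graph satisfies `|E| + #components ≤ n`. -/
lemma acyclic_card_le : ∀ k (G : SimpleGraph V),
    G.edgeSet.ncard ≤ k → G.IsAcyclic →
    G.edgeSet.ncard + Nat.card G.ConnectedComponent ≤ Nat.card V := by
  intro k
  induction k with
  | zero =>
    intro G hk hac
    have h0 : G.edgeSet.ncard = 0 := by omega
    rw [h0, zero_add]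
    exact Nat.card_le_card_of_surjective _ (fun c => c.exists_rep)
  | succ k ih =>
    intro G hk hac
    classical
    rcases Set.eq_empty_or_nonempty G.edgeSet with hE | ⟨e, he⟩
    · rw [hE]
      simp only [Set.ncard_empty, zero_add]
      exact Nat.card_le_card_of_surjective _ (fun c => c.exists_rep)
    · induction e with
      | _ x y =>
        have he' : G.Adj x y := he
        have hmem : s(x,y) ∈ G.edgeSet := he
        have hbr : G.IsBridge s(x,y) :=
          isAcyclic_iff_forall_edge_isBridge.mp hac hmem
        rw [isBridge_iff] at hbr
        set G' := G \ fromEdgeSet {s(x,y)} with hG'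
        have hE' : G'.edgeSet = G.edgeSet \ {s(x,y)} := edgeSet_delete_eq he'
        have hac' : G'.IsAcyclic := by
          intro v p hp
          exact hac (p.map (Hom.ofLE sdiff_le))
            (hp.map (fun u v huv => huv))
        have hcard' : G'.edgeSet.ncard = G.edgeSet.ncard - 1 := by
          rw [hE', Set.ncard_diff_singleton_of_mem hmem]
        have hpos : 0 < G.edgeSet.ncard :=
          (Set.ncard_pos (Set.toFinite _)).mpr ⟨_, hmem⟩
        have hIH := ih G' (by omega) hac'
        -- components: card CC G < card CC G'
        have himp : ∀ u v, G'.Adj u v → G.Reachable u v := by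
          intro u v huv
          exact ((sdiff_adj _ _ _ _).mp huv).1.reachable
        have hlt : Nat.card G.ConnectedComponent < Nat.card G'.ConnectedComponent := by
          refine card_cc_lt himp ?_ he'.reachable
          intro hh
          rw [ConnectedComponent.eq] at hh
          exact hbr hh
        omega

end Counting

section ConnFix
variable [Fintype V] [DecidableEq V]

lemma sum_ncard_neighborSet (G : SimpleGraph V) :
    ∑ i, (G.neighborSet i).ncard = 2 * G.edgeSet.ncard := by
  classical
  have h := G.sum_degrees_eq_twice_card_edges
  have h2 : ∀ i, G.degree i = (G.neighborSet i).ncard := deg_eq_ncard G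
  have h3 : G.edgeSet.ncard = G.edgeFinset.card := Set.ncard_eq_toFinset_card' _
  rw [h3]
  rw [← h, Finset.sum_congr rfl (fun i _ => (h2 i).symm)]

lemma connect_fix [Nonempty V] : ∀ t (G : SimpleGraph V), (∀ i, 0 < (G.neighborSet i).ncard) →
    (2 * (Nat.card V - 1) ≤ ∑ i, (G.neighborSet i).ncard) →
    Nat.card G.ConnectedComponent ≤ t →
    ∃ H : SimpleGraph V, H.Connected ∧ ∀ i, (H.neighborSet i).ncard = (G.neighborSet i).ncard := by
  intro t
  induction t with
  | zero =>
    intro G _ _ hcc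
    exfalso
    have : 0 < Nat.card G.ConnectedComponent := by
      have : Nonempty G.ConnectedComponent :=
        ⟨G.connectedComponentMk (Classical.arbitrary V)⟩
      exact Nat.card_pos
    omega
  | succ t ih =>
    intro G hdeg hsum hcc
    classical
    by_cases hC : G.Connected
    · exact ⟨G, hC, fun i => rfl⟩
    -- G disconnected
    have hne : ∃ u v : V, ¬ G.Reachable u v := by
      by_contra hh
      push_neg at hh
      exact hC ⟨fun u v => hh u v⟩
    obtain ⟨u0, v0, huv⟩ := hne
    have hcc2 : 2 ≤ Nat.card G.ConnectedComponent := by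
      have : Nontrivial G.ConnectedComponent := by
        refine ⟨G.connectedComponentMk u0, G.connectedComponentMk v0, fun hh => ?_⟩
        rw [ConnectedComponent.eq] at hh
        exact huv hh
      exact Finite.one_lt_card_iff_nontrivial.mpr this
    have hE : Nat.card V - 1 ≤ G.edgeSet.ncard := by
      have := sum_ncard_neighborSet G
      omega
    -- not acyclic
    have hnac : ¬ G.IsAcyclic := by
      intro hac
      have h1 := acyclic_card_le G.edgeSet.ncard G le_rfl hac
      have h2 : 0 < Nat.card V := Nat.card_pos
      omega
    rw [isAcyclic_iff_forall_edge_isBridge] at hnac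
    push_neg at hnac
    obtain ⟨e, heE, hbr⟩ := hnac
    induction e with
    | _ a b =>
    have hab : G.Adj a b := heE
    have hreach_ab : (G \ fromEdgeSet {s(a,b)}).Reachable a b := by
      rw [isBridge_iff] at hbr
      push_neg at hbr
      exact hbr
    -- a vertex not reachable from a
    have hz : ∃ z, ¬ G.Reachable a z := by
      by_contra hh
      push_neg at hh
      exact hC ⟨fun x y => (hh x).symm.trans (hh y)⟩
    obtain ⟨z, hz⟩ := hz
    have hzd : ∃ d', G.Adj z d' := by
      have := hdeg z
      rw [Set.ncard_pos (Set.toFinite _)] at this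
      obtain ⟨d', hd'⟩ := this
      exact ⟨d', hd'⟩
    obtain ⟨d', hzd'⟩ := hzd
    have hrab : G.Reachable a b := hab.reachable
    have hnaz : ¬ G.Reachable a z := hz
    have hnad : ¬ G.Reachable a d' := fun hh => hnaz (hh.trans hzd'.symm.reachable)
    have hnbz : ¬ G.Reachable b z := fun hh => hnaz (hrab.trans hh)
    have hnbd : ¬ G.Reachable b d' := fun hh => hnad (hrab.trans hh)
    have hOK : SwapOK G a b z d' :=
      ⟨hab, hzd', fun hh => hnaz hh.reachable, fun hh => hnbd hh.reachable,
        fun hh => hnaz (hh ▸ Reachable.refl a), fun hh => hnad (hh ▸ Reachable.refl a),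
        fun hh => hnbz (hh ▸ Reachable.refl b), fun hh => hnbd (hh ▸ Reachable.refl b)⟩
    set G2 := swapG G a b z d' with hG2
    -- transfer the a-b walk
    obtain ⟨w⟩ := hreach_ab
    have hwe : ∀ f ∈ w.edges, f ∈ G2.edgeSet := by
      intro f hf
      have hf1 : f ∈ (G \ fromEdgeSet {s(a,b)}).edgeSet := w.edges_subset_edgeSet hf
      rw [edgeSet_delete_eq hab] at hf1
      have hfzd : f ≠ s(z, d') := by
        intro hh
        subst hh
        have hzsupp : z ∈ w.support := w.fst_mem_support_of_mem_edges hf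
        have : (G \ fromEdgeSet {s(a,b)}).Reachable a z := ⟨w.takeUntil z hzsupp⟩
        exact hnaz (reachable_of_adj_imp
          (fun x y hxy => (((sdiff_adj _ _ _ _).mp hxy).1).reachable) this)
      induction f with
      | _ u v =>
      rw [mem_edgeSet]
      rw [hG2, swapG_adj]
      exact Or.inl ⟨hf1.1, hf1.2, hfzd⟩
    have hab2 : G2.Reachable a b := ⟨w.transfer G2 hwe⟩
    have haz2 : G2.Adj a z := by
      rw [hG2, swapG_adj]
      exact Or.inr ⟨Or.inl rfl, fun hh => hnaz (hh ▸ Reachable.refl a)⟩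
    have hbd2 : G2.Adj b d' := by
      rw [hG2, swapG_adj]
      exact Or.inr ⟨Or.inr rfl, fun hh => hnbd (hh ▸ Reachable.refl b)⟩
    have hzd2 : G2.Reachable z d' :=
      (haz2.symm.reachable.trans hab2).trans hbd2.reachable
    have himp : ∀ x y, G.Adj x y → G2.Reachable x y := by
      intro x y hxy
      by_cases h1 : s(x,y) = s(a,b)
      · rw [Sym2.eq_iff] at h1
        rcases h1 with ⟨rfl, rfl⟩ | ⟨rfl, rfl⟩
        · exact hab2
        · exact hab2.symm
      by_cases h2 : s(x,y) = s(z,d')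
      · rw [Sym2.eq_iff] at h2
        rcases h2 with ⟨rfl, rfl⟩ | ⟨rfl, rfl⟩
        · exact hzd2
        · exact hzd2.symm
      · refine SimpleGraph.Adj.reachable ?_
        rw [hG2, swapG_adj]
        exact Or.inl ⟨hxy, h1, h2⟩
    have hlt : Nat.card G2.ConnectedComponent < Nat.card G.ConnectedComponent := by
      refine card_cc_lt himp ?_ haz2.reachable
      intro hh
      rw [ConnectedComponent.eq] at hh
      exact hnaz hh
    have hdeg2 : ∀ i, (G2.neighborSet i).ncard = (G.neighborSet i).ncard :=
      ncard_neighborSet_swapG hOK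
    obtain ⟨H, hH1, hH2⟩ := ih G2 (fun i => (hdeg2 i) ▸ hdeg i)
      (by rw [Finset.sum_congr rfl (fun i _ => hdeg2 i)]; exact hsum) (by omega)
    exact ⟨H, hH1, fun i => (hH2 i).trans (hdeg2 i)⟩

end ConnFix

section HH

variable {n : ℕ}

/-- The "priority set" of vertices 1..k in Fin n. -/
def Bset (n k : ℕ) : Set (Fin n) := {j | 1 ≤ j.val ∧ j.val ≤ k}

lemma ncard_Bset (hn : 1 ≤ n) (k : ℕ) (hk : k ≤ n - 1) : (Bset n k).ncard = k := by
  have himg : Bset n k = (fun x : Fin k => (⟨x.val + 1, by omega⟩ : Fin n)) '' Set.univ := by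
    ext j
    simp only [Bset, Set.mem_setOf_eq, Set.image_univ, Set.mem_range]
    constructor
    · rintro ⟨h1, h2⟩
      exact ⟨⟨j.val - 1, by omega⟩, by ext; simp; omega⟩
    · rintro ⟨x, rfl⟩
      simp only []
      omega
  have hinj : Function.Injective (fun x : Fin k => (⟨x.val + 1, by omega⟩ : Fin n)) := by
    intro x y hxy
    have := congrArg Fin.val hxy
    simp only [] at this
    ext
    omega
  rw [himg, Set.ncard_image_of_injective _ hinj, Set.ncard_univ,
    Nat.card_eq_fintype_card, Fintype.card_fin]

lemma nbhd_eq_Bset {G : SimpleGraph (Fin n)} {z : Fin n} {k : ℕ}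
    (hdeg : (G.neighborSet z).ncard = k) (hB : (Bset n k).ncard = k)
    (h : ((G.neighborSet z) ∩ Bset n k).ncard = k) :
    G.neighborSet z = Bset n k := by
  have h1 : G.neighborSet z ∩ Bset n k = G.neighborSet z :=
    Set.eq_of_subset_of_ncard_le Set.inter_subset_left (by omega) (Set.toFinite _)
  have h2 : G.neighborSet z ∩ Bset n k = Bset n k :=
    Set.eq_of_subset_of_ncard_le Set.inter_subset_right (by omega) (Set.toFinite _)
  rw [← h1, h2]

lemma hh_process (hn : 1 ≤ n) (s : Fin n → ℕ) (hmono : Antitone s)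
    (hk : s ⟨0, hn⟩ ≤ n - 1) :
    ∀ t (G : SimpleGraph (Fin n)), (∀ i, (G.neighborSet i).ncard = s i) →
    s ⟨0, hn⟩ - ((G.neighborSet ⟨0, hn⟩) ∩ Bset n (s ⟨0, hn⟩)).ncard ≤ t →
    ∃ H : SimpleGraph (Fin n), (∀ i, (H.neighborSet i).ncard = s i) ∧
      H.neighborSet ⟨0, hn⟩ = Bset n (s ⟨0, hn⟩) := by
  set z : Fin n := ⟨0, hn⟩ with hz
  set k := s z with hkdef
  have hB : (Bset n k).ncard = k := ncard_Bset hn k hk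
  intro t
  induction t with
  | zero =>
    intro G hdeg hm
    have hsub : (G.neighborSet z ∩ Bset n k).ncard ≤ k := by
      rw [hkdef, ← hdeg z]
      exact Set.ncard_le_ncard Set.inter_subset_left (Set.toFinite _)
    have heq : (G.neighborSet z ∩ Bset n k).ncard = k := by omega
    exact ⟨G, hdeg, nbhd_eq_Bset (hdeg z) hB heq⟩
  | succ t ih =>
    intro G hdeg hm
    have hsub : (G.neighborSet z ∩ Bset n k).ncard ≤ k := by
      rw [hkdef, ← hdeg z]
      exact Set.ncard_le_ncard Set.inter_subset_left (Set.toFinite _)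
    by_cases hfull : (G.neighborSet z ∩ Bset n k).ncard = k
    · exact ⟨G, hdeg, nbhd_eq_Bset (hdeg z) hB hfull⟩
    have hlt : (G.neighborSet z ∩ Bset n k).ncard < k := by omega
    -- find j ∈ N(z) \ B
    have hjex : ∃ j, j ∈ G.neighborSet z ∧ j ∉ Bset n k := by
      by_contra hh
      push_neg at hh
      have : G.neighborSet z ⊆ G.neighborSet z ∩ Bset n k :=
        fun x hx => ⟨hx, hh x hx⟩
      have := Set.ncard_le_ncard this (Set.toFinite _)
      rw [hdeg z] at this
      omega
    obtain ⟨j, hjN, hjB⟩ := hjex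
    -- find i ∈ B \ N(z)
    have hiex : ∃ i, i ∈ Bset n k ∧ i ∉ G.neighborSet z := by
      by_contra hh
      push_neg at hh
      have : Bset n k ⊆ G.neighborSet z ∩ Bset n k := fun x hx => ⟨hh x hx, hx⟩
      have := Set.ncard_le_ncard this (Set.toFinite _)
      omega
    obtain ⟨i, hiB, hiN⟩ := hiex
    have hi1 : 1 ≤ i.val := hiB.1
    have hik : i.val ≤ k := hiB.2
    have hj1 : 1 ≤ j.val := by
      rcases Nat.eq_zero_or_pos j.val with h0 | h0
      · exfalso
        have : j = z := by ext; simpa using h0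
        rw [this] at hjN
        exact G.irrefl hjN
      · exact h0
    have hjk : k < j.val := by
      by_contra hh
      exact hjB ⟨hj1, by omega⟩
    have hij : i ≤ j := by
      rw [Fin.le_def]
      omega
    have hsji : s j ≤ s i := hmono hij
    -- adjacency facts
    have hzj : G.Adj z j := hjN
    have hniz : ¬ G.Adj i z := fun hh => hiN hh.symm
    have hzNj : z ∈ G.neighborSet j := hzj.symm
    have hzNi : z ∉ G.neighborSet i := fun hh => hniz ((mem_neighborSet _ _ _).mp hh).symm.symm
    -- find k' ∈ N(i) \ N(j), k' ≠ j
    have hkex : ∃ k', k' ∈ G.neighborSet i ∧ k' ∉ G.neighborSet j ∧ k' ≠ j := by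
      by_contra hh
      push_neg at hh
      have hsubs : G.neighborSet i \ {j} ⊆ G.neighborSet j \ {z, i} := by
        rintro x ⟨hx1, hx2⟩
        simp only [Set.mem_singleton_iff] at hx2
        have hxNj : x ∈ G.neighborSet j := by
          by_contra hxn
          exact hx2 (hh x hx1 hxn)
        refine ⟨hxNj, ?_⟩
        simp only [Set.mem_insert_iff, Set.mem_singleton_iff]
        push_neg
        constructor
        · rintro rfl
          exact hzNi hx1
        · rintro rfl
          exact G.irrefl hx1
      have hle := Set.ncard_le_ncard hsubs (Set.toFinite _)
      have hzcard : (G.neighborSet j \ {z}).ncard = s j - 1 := by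
        rw [Set.ncard_diff_singleton_of_mem hzNj, hdeg j]
      have hsj1 : 1 ≤ s j := by
        have h0 : 0 < (G.neighborSet j).ncard :=
          (Set.ncard_pos (Set.toFinite _)).mpr ⟨z, hzNj⟩
        rw [hdeg j] at h0
        omega
      by_cases hji : j ∈ G.neighborSet i
      · have hiNj : i ∈ G.neighborSet j := ((mem_neighborSet _ _ _).mp hji).symm
        have e1 : (G.neighborSet i \ {j}).ncard = s i - 1 := by
          rw [Set.ncard_diff_singleton_of_mem hji, hdeg i]
        have e2 : G.neighborSet j \ {z, i} = (G.neighborSet j \ {z}) \ {i} := by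
          rw [Set.diff_diff, Set.union_singleton]
          congr 1
          ext x
          simp only [Set.mem_insert_iff, Set.mem_singleton_iff]
          tauto
        have hiz : i ≠ z := by
          intro hh2
          rw [hh2] at hi1
          simp [hz] at hi1
        have hiNjz : i ∈ G.neighborSet j \ {z} := ⟨hiNj, by simpa using hiz⟩
        have e3 : ((G.neighborSet j \ {z}) \ {i}).ncard = s j - 1 - 1 := by
          rw [Set.ncard_diff_singleton_of_mem hiNjz, hzcard]
        have hsj2 : 1 ≤ s j - 1 := by
          have h0 : 0 < (G.neighborSet j \ {z}).ncard :=
            (Set.ncard_pos (Set.toFinite _)).mpr ⟨i, hiNjz⟩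
          omega
        rw [e1, e2, e3] at hle
        omega
      · have e1 : G.neighborSet i \ {j} = G.neighborSet i :=
          Set.diff_singleton_eq_self hji
        have e4 : G.neighborSet j \ {z, i} ⊆ G.neighborSet j \ {z} := by
          apply Set.diff_subset_diff_right
          simp
        have := Set.ncard_le_ncard e4 (Set.toFinite _)
        rw [e1, hdeg i] at hle
        rw [hzcard] at this
        omega
    obtain ⟨k', hk'Ni, hk'Nj, hk'j⟩ := hkex
    -- the swap
    have hOK : SwapOK G z j i k' := by
      refine ⟨hzj, hk'Ni, fun hh => hiN hh, fun hh => hk'Nj hh, ?_, ?_, ?_, ?_⟩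
      · intro hh
        rw [← hh] at hi1
        simp [hz] at hi1
      · intro hh
        rw [← hh] at hk'Ni
        exact hzNi hk'Ni
      · intro hh
        rw [hh] at hjB
        exact hjB hiB
      · exact fun hh => hk'j hh.symm
    set G2 := swapG G z j i k' with hG2
    have hdeg2 : ∀ x, (G2.neighborSet x).ncard = s x :=
      fun x => (ncard_neighborSet_swapG hOK x).trans (hdeg x)
    have hN2 : G2.neighborSet z = insert i (G.neighborSet z \ {j}) :=
      swapG_neighborSet_a hOK
    have hmeas : (G2.neighborSet z ∩ Bset n k).ncard
        = (G.neighborSet z ∩ Bset n k).ncard + 1 := by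
      rw [hN2]
      have e1 : insert i (G.neighborSet z \ {j}) ∩ Bset n k
          = insert i ((G.neighborSet z \ {j}) ∩ Bset n k) :=
        Set.insert_inter_of_mem hiB
      have e2 : (G.neighborSet z \ {j}) ∩ Bset n k = G.neighborSet z ∩ Bset n k := by
        ext x
        simp only [Set.mem_inter_iff, Set.mem_diff, Set.mem_singleton_iff]
        constructor
        · rintro ⟨⟨h1, -⟩, h2⟩
          exact ⟨h1, h2⟩
        · rintro ⟨h1, h2⟩
          exact ⟨⟨h1, fun hhh => hjB (hhh ▸ h2)⟩, h2⟩
      rw [e1, e2, Set.ncard_insert_of_notMem (fun hh => hiN hh.1) (Set.toFinite _)]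
    exact ih G2 hdeg2 (by omega)

end HH

section Constructions
variable {n : ℕ}

def embF (hn : 1 ≤ n) : Fin (n-1) → Fin n := fun a => ⟨a.val + 1, by omega⟩

lemma embF_injective (hn : 1 ≤ n) : Function.Injective (embF hn) := by
  intro x y hxy
  have := congrArg Fin.val hxy
  simp only [embF] at this
  ext
  omega

lemma embF_ne_z (hn : 1 ≤ n) (a : Fin (n-1)) : embF hn a ≠ ⟨0, hn⟩ := by
  intro hh
  have := congrArg Fin.val hh
  simp [embF] at this

lemma range_embF (hn : 1 ≤ n) :
    Set.range (embF hn) = {v : Fin n | v ≠ ⟨0, hn⟩} := by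
  ext v
  simp only [Set.mem_range, Set.mem_setOf_eq]
  constructor
  · rintro ⟨a, rfl⟩
    exact embF_ne_z hn a
  · intro hv
    have hv1 : 1 ≤ v.val := by
      rcases Nat.eq_zero_or_pos v.val with h0 | h0
      · exact absurd (by ext; simpa using h0) hv
      · exact h0
    exact ⟨⟨v.val - 1, by omega⟩, by ext; simp [embF]; omega⟩

lemma mem_nbhd_z_iff (hn : 1 ≤ n) (H : SimpleGraph (Fin n)) (k : ℕ)
    (hNz : H.neighborSet ⟨0, hn⟩ = Bset n k) (a : Fin (n-1)) :
    (⟨0, hn⟩ : Fin n) ∈ H.neighborSet (embF hn a) ↔ a.val + 1 ≤ k := by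
  rw [mem_neighborSet]
  constructor
  · intro hh
    have : embF hn a ∈ H.neighborSet ⟨0, hn⟩ := hh.symm
    rw [hNz] at this
    simpa [Bset, embF] using this.2
  · intro hh
    have : embF hn a ∈ H.neighborSet ⟨0, hn⟩ := by
      rw [hNz]
      exact ⟨by simp [embF], by simpa [embF] using hh⟩
    exact ((mem_neighborSet _ _ _).mp this).symm

lemma ncard_comap (hn : 1 ≤ n) (H : SimpleGraph (Fin n)) (k : ℕ)
    (hNz : H.neighborSet ⟨0, hn⟩ = Bset n k) (a : Fin (n-1)) :
    ((H.comap (embF hn)).neighborSet a).ncard =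
      if a.val + 1 ≤ k then (H.neighborSet (embF hn a)).ncard - 1
      else (H.neighborSet (embF hn a)).ncard := by
  have hpre : (H.comap (embF hn)).neighborSet a
      = (embF hn) ⁻¹' (H.neighborSet (embF hn a)) := rfl
  rw [hpre, ← Set.ncard_image_of_injective _ (embF_injective hn),
    Set.image_preimage_eq_inter_range, range_embF hn]
  have hdiff : H.neighborSet (embF hn a) ∩ {v : Fin n | v ≠ ⟨0, hn⟩}
      = H.neighborSet (embF hn a) \ {(⟨0, hn⟩ : Fin n)} := by
    ext x
    simp only [Set.mem_inter_iff, Set.mem_setOf_eq, Set.mem_diff, Set.mem_singleton_iff]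
  rw [hdiff]
  by_cases hc : a.val + 1 ≤ k
  · rw [if_pos hc, Set.ncard_diff_singleton_of_mem
      ((mem_nbhd_z_iff hn H k hNz a).mpr hc)]
  · rw [if_neg hc, Set.diff_singleton_eq_self
      (fun hh => hc ((mem_nbhd_z_iff hn H k hNz a).mp hh))]

/-- Add a vertex 0 joined to vertices 1..k on top of G' (shifted up by one). -/
def addV (hn : 1 ≤ n) (G' : SimpleGraph (Fin (n-1))) (k : ℕ) : SimpleGraph (Fin n) :=
  SimpleGraph.fromRel (fun i j =>
    (i = ⟨0, hn⟩ ∧ 1 ≤ j.val ∧ j.val ≤ k) ∨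
    (∃ a b : Fin (n-1), G'.Adj a b ∧ i = embF hn a ∧ j = embF hn b))

lemma addV_nbhd_z (hn : 1 ≤ n) (G' : SimpleGraph (Fin (n-1))) (k : ℕ) (hk : k ≤ n - 1) :
    (addV hn G' k).neighborSet ⟨0, hn⟩ = Bset n k := by
  ext j
  rw [mem_neighborSet, addV, fromRel_adj]
  constructor
  · rintro ⟨hne, (⟨-, h2, h3⟩ | ⟨a, b, -, ha, -⟩) | (⟨hj, -⟩ | ⟨a, b, -, -, hb⟩)⟩
    · exact ⟨h2, h3⟩
    · exact absurd ha.symm (embF_ne_z hn a)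
    · exact absurd hj.symm hne
    · exact absurd hb.symm (embF_ne_z hn b)
  · rintro ⟨h1, h2⟩
    refine ⟨fun hh => by rw [← hh] at h1; simp at h1, Or.inl (Or.inl ⟨rfl, h1, h2⟩)⟩

lemma addV_adj_emb (hn : 1 ≤ n) (G' : SimpleGraph (Fin (n-1))) (k : ℕ) (a : Fin (n-1))
    (y : Fin n) :
    (addV hn G' k).Adj (embF hn a) y ↔
      (y = ⟨0, hn⟩ ∧ a.val + 1 ≤ k) ∨ (∃ b, G'.Adj a b ∧ y = embF hn b) := by
  rw [addV, fromRel_adj]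
  constructor
  · rintro ⟨hne, (⟨h1, -⟩ | ⟨a', b, hab, ha, hb⟩) | (⟨h1, h2, h3⟩ | ⟨a', b, hab, ha, hb⟩)⟩
    · exact absurd h1 (embF_ne_z hn a)
    · obtain rfl := embF_injective hn ha
      exact Or.inr ⟨b, hab, hb⟩
    · refine Or.inl ⟨h1, by simpa [embF] using h3⟩
    · obtain rfl := embF_injective hn hb
      exact Or.inr ⟨a', hab.symm, ha⟩
  · rintro (⟨rfl, h2⟩ | ⟨b, hab, rfl⟩)
    · exact ⟨embF_ne_z hn a, Or.inr (Or.inl ⟨rfl, by simp [embF], by simpa [embF] using h2⟩)⟩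
    · refine ⟨fun hh => G'.irrefl ((embF_injective hn hh) ▸ hab), ?_⟩
      exact Or.inl (Or.inr ⟨a, b, hab, rfl, rfl⟩)

lemma addV_nbhd_emb (hn : 1 ≤ n) (G' : SimpleGraph (Fin (n-1))) (k : ℕ) (a : Fin (n-1)) :
    ((addV hn G' k).neighborSet (embF hn a)).ncard =
      if a.val + 1 ≤ k then (G'.neighborSet a).ncard + 1 else (G'.neighborSet a).ncard := by
  have hset : (addV hn G' k).neighborSet (embF hn a) =
      (if a.val + 1 ≤ k then {(⟨0, hn⟩ : Fin n)} else ∅) ∪ embF hn '' (G'.neighborSet a) := by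
    ext y
    rw [mem_neighborSet, addV_adj_emb]
    by_cases hc : a.val + 1 ≤ k
    · simp only [if_pos hc, Set.union_def, Set.mem_setOf_eq, Set.mem_singleton_iff,
        Set.mem_image, mem_neighborSet]
      constructor
      · rintro (⟨rfl, -⟩ | ⟨b, hab, rfl⟩)
        · exact Or.inl rfl
        · exact Or.inr ⟨b, hab, rfl⟩
      · rintro (rfl | ⟨b, hab, rfl⟩)
        · exact Or.inl ⟨rfl, hc⟩
        · exact Or.inr ⟨b, hab, rfl⟩
    · simp only [if_neg hc, Set.empty_union, Set.mem_image, mem_neighborSet]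
      constructor
      · rintro (⟨rfl, h2⟩ | ⟨b, hab, rfl⟩)
        · exact absurd h2 hc
        · exact ⟨b, hab, rfl⟩
      · rintro ⟨b, hab, rfl⟩
        exact Or.inr ⟨b, hab, rfl⟩
  rw [hset]
  have himg : (embF hn '' (G'.neighborSet a)).ncard = (G'.neighborSet a).ncard :=
    Set.ncard_image_of_injective _ (embF_injective hn)
  by_cases hc : a.val + 1 ≤ k
  · rw [if_pos hc, if_pos hc, Set.singleton_union,
      Set.ncard_insert_of_notMem (fun hh => ?_) (Set.toFinite _), himg]
    obtain ⟨b, -, hb⟩ := hh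
    exact embF_ne_z hn b hb
  · rw [if_neg hc, if_neg hc, Set.empty_union, himg]

lemma fin_cases_z_emb (hn : 1 ≤ n) (i : Fin n) :
    i = ⟨0, hn⟩ ∨ ∃ a : Fin (n-1), i = embF hn a := by
  rcases Nat.eq_zero_or_pos i.val with h0 | h0
  · exact Or.inl (by ext; simpa using h0)
  · exact Or.inr ⟨⟨i.val - 1, by omega⟩, by ext; simp [embF]; omega⟩

end Constructions


/-- A sequence `s` of length `n` is graphic if it is the degree sequence of a
finite simple graph on `n` vertices. -/
def Graphic (n : ℕ) (s : Fin n → ℕ) : Prop :=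
  ∃ G : SimpleGraph (Fin n), ∃ _ : DecidableRel G.Adj, ∀ i, G.degree i = s i

/-- A sequence `s` is connected and graphic if it is the degree sequence of a
connected finite simple graph on `n` vertices. -/
def ConnectedGraphic (n : ℕ) (s : Fin n → ℕ) : Prop :=
  ∃ G : SimpleGraph (Fin n), ∃ _ : DecidableRel G.Adj,
    G.Connected ∧ ∀ i, G.degree i = s i

theorem connected_graphic_iff (n : ℕ) (hn : 1 ≤ n) (s : Fin n → ℕ)
    (hpos : ∀ i, 0 < s i) (hmono : Antitone s)
    (hmax : s ⟨0, hn⟩ ≤ n - 1)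
    (s' : Fin (n - 1) → ℕ)
    (hs' : ∀ j : Fin (n - 1),
      s' j = if j.val + 1 ≤ s ⟨0, hn⟩
             then s ⟨j.val + 1, by omega⟩ - 1
             else s ⟨j.val + 1, by omega⟩) :
    ConnectedGraphic n s ↔ Graphic (n - 1) s' ∧ 2 * (n - 1) ≤ ∑ i, s i := by
  constructor
  · rintro ⟨G, inst, hconn, hdeg⟩
    have hdegn : ∀ i, (G.neighborSet i).ncard = s i := by
      intro i
      rw [← deg_eq_ncard G i, hdeg i]
    constructor
    · obtain ⟨H, hH1, hH2⟩ :=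
        hh_process hn s hmono hmax (s ⟨0, hn⟩) G hdegn (Nat.sub_le _ _)
      classical
      refine ⟨H.comap (embF hn), Classical.decRel _, fun a => ?_⟩
      rw [deg_eq_ncard, ncard_comap hn H (s ⟨0, hn⟩) hH2 a, hH1 (embF hn a), hs' a]
      rfl
    · have hsum2 : ∑ i, (G.neighborSet i).ncard = 2 * G.edgeSet.ncard :=
        sum_ncard_neighborSet G
      have hcards := conn_card_le G.edgeSet.ncard G le_rfl hconn
      have hcardV : Fintype.card (Fin n) = n := Fintype.card_fin n
      have hss : ∑ i, s i = ∑ i, (G.neighborSet i).ncard :=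
        Finset.sum_congr rfl (fun i _ => (hdegn i).symm)
      omega
  · rintro ⟨⟨G', inst', hdeg'⟩, hsum⟩
    classical
    have hdegn' : ∀ a, (G'.neighborSet a).ncard = s' a := fun a => by
      rw [← deg_eq_ncard G' a, hdeg' a]
    set G0 := addV hn G' (s ⟨0, hn⟩) with hG0
    have hdeg0 : ∀ i, (G0.neighborSet i).ncard = s i := by
      intro i
      rcases fin_cases_z_emb hn i with rfl | ⟨a, rfl⟩
      · rw [hG0, addV_nbhd_z hn G' _ hmax, ncard_Bset hn _ hmax]
      · rw [hG0, addV_nbhd_emb hn G' _ a, hdegn' a, hs' a]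
        have hpos' : 0 < s (embF hn a) := hpos _
        have hse : s (⟨a.val + 1, by omega⟩ : Fin n) = s (embF hn a) := rfl
        by_cases hc : a.val + 1 ≤ s ⟨0, hn⟩
        · rw [if_pos hc, if_pos hc, hse]
          omega
        · rw [if_neg hc, if_neg hc, hse]
    haveI : Nonempty (Fin n) := ⟨⟨0, hn⟩⟩
    have hcardn : Nat.card (Fin n) = n := by simp
    obtain ⟨H, hHconn, hHdeg⟩ := connect_fix (Nat.card G0.ConnectedComponent) G0
      (fun i => by rw [hdeg0 i]; exact hpos i)
      (by rw [Finset.sum_congr rfl (fun i _ => hdeg0 i), hcardn]; exact hsum)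
      le_rfl
    exact ⟨H, Classical.decRel _, hHconn,
      fun i => by rw [deg_eq_ncard, hHdeg i, hdeg0 i]⟩
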